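/- Let F be a field and Λ a Lagrangian subspace of F^n × F^n containing c₀ = ((1,…,1),(0,…,0)). Then there exists A in the electrical linear group EL_n(F) such that Λ = A·(F^n × {0}), i.e., Λ is the image of the subspace F^n × {0} under the invertible matrix A. -/

import Mathlib

open Module Matrix

/-- The generator `Ξ_j(t) = [[I, t E_{j,j}], [0, I]]` of the electrical linear group,
corresponding to adjoining a boundary spike at vertex `j`. -/
def XiD {F : Type*} [Field F] {n : ℕ} (j : Fin n) (t : F) :
    Matrix (Fin n ⊕ Fin n) (Fin n ⊕ Fin n) F :=
  Matrix.fromBlocks 1 (Matrix.single j j t) 0 1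

/-- The generator `Ξ_{i,j}(t) = [[I, 0], [t(E_{i,i} − E_{i,j} − E_{j,i} + E_{j,j}), I]]`
of the electrical linear group, corresponding to adjoining a boundary edge from `i` to `j`. -/
def XiOff {F : Type*} [Field F] {n : ℕ} (i j : Fin n) (t : F) :
    Matrix (Fin n ⊕ Fin n) (Fin n ⊕ Fin n) F :=
  Matrix.fromBlocks 1 0
    (t • (Matrix.single i i (1 : F) - Matrix.single i j 1
      - Matrix.single j i 1 + Matrix.single j j 1)) 1

/-- The generating set of the electrical linear group inside `GL_{2n}(F)`. -/
def ELGen (F : Type*) [Field F] (n : ℕ) :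
    Set ((Matrix (Fin n ⊕ Fin n) (Fin n ⊕ Fin n) F)ˣ) :=
  {A | (∃ j t, (A : Matrix (Fin n ⊕ Fin n) (Fin n ⊕ Fin n) F) = XiD j t) ∨
       (∃ i j t, i ≠ j ∧ (A : Matrix (Fin n ⊕ Fin n) (Fin n ⊕ Fin n) F) = XiOff i j t)}

/-- The electrical linear group `EL_n(F)`: the subgroup of `GL_{2n}(F)` generated by all
the matrices `Ξ_j(t)` and `Ξ_{i,j}(t)`. -/
def EL (F : Type*) [Field F] (n : ℕ) :
    Subgroup ((Matrix (Fin n ⊕ Fin n) (Fin n ⊕ Fin n) F)ˣ) :=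
  Subgroup.closure (ELGen F n)

section Aux

variable {F : Type*} [Field F] {n : ℕ}


def lowerM (L : Matrix (Fin n) (Fin n) F) : Matrix (Fin n ⊕ Fin n) (Fin n ⊕ Fin n) F :=
  Matrix.fromBlocks 1 0 L 1

lemma lowerM_mul (L L' : Matrix (Fin n) (Fin n) F) :
    lowerM L * lowerM L' = lowerM (L + L') := by
  rw [lowerM, lowerM, lowerM, fromBlocks_multiply]
  congr 1 <;> simp

def lowerU (L : Matrix (Fin n) (Fin n) F) : (Matrix (Fin n ⊕ Fin n) (Fin n ⊕ Fin n) F)ˣ :=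
  ⟨lowerM L, lowerM (-L), by rw [lowerM_mul]; simp [lowerM, fromBlocks_one],
    by rw [lowerM_mul]; simp [lowerM, fromBlocks_one]⟩

lemma XiD_mul (j : Fin n) (t s : F) : XiD j t * XiD j s = XiD j (t + s) := by
  rw [XiD, XiD, XiD, fromBlocks_multiply]
  congr 1 <;> simp [single_add, add_comm]

def upperU (j : Fin n) (t : F) : (Matrix (Fin n ⊕ Fin n) (Fin n ⊕ Fin n) F)ˣ :=
  ⟨XiD j t, XiD j (-t), by rw [XiD_mul]; simp [XiD, fromBlocks_one],
    by rw [XiD_mul]; simp [XiD, fromBlocks_one]⟩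




def Qmat (i j : Fin n) : Matrix (Fin n) (Fin n) F :=
  Matrix.single i i (1 : F) - Matrix.single i j 1
      - Matrix.single j i 1 + Matrix.single j j 1

lemma upperU_mem (j : Fin n) (t : F) : upperU j t ∈ EL F n :=
  Subgroup.subset_closure (Or.inl ⟨j, t, rfl⟩)

lemma lowerU_Q_mem {i j : Fin n} (hij : i ≠ j) (t : F) :
    lowerU (t • Qmat i j) ∈ EL F n :=
  Subgroup.subset_closure (Or.inr ⟨i, j, t, hij, rfl⟩)

lemma lowerU_one : (lowerU (0 : Matrix (Fin n) (Fin n) F)) = 1 := by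
  ext : 1
  simp [lowerU, lowerM, fromBlocks_one]

lemma lowerU_mul (L L' : Matrix (Fin n) (Fin n) F) :
    lowerU L * lowerU L' = lowerU (L + L') := by
  ext : 1
  exact lowerM_mul L L'

lemma lowerU_sum_mem {ι : Type*} (s : Finset ι) (f : ι → Matrix (Fin n) (Fin n) F)
    (hf : ∀ p ∈ s, lowerU (f p) ∈ EL F n) :
    lowerU (∑ p ∈ s, f p) ∈ EL F n := by
  classical
  induction s using Finset.induction_on with
  | empty => simpa [lowerU_one] using (EL F n).one_mem
  | insert a s hx ih =>
      rw [Finset.sum_insert hx, ← lowerU_mul]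
      exact mul_mem (hf _ (Finset.mem_insert_self _ _))
        (ih fun p hp => hf p (Finset.mem_insert_of_mem hp))


lemma quad_sum (c : Fin n → Fin n → F) (a b : Fin n) :
    ((((∑ x : Fin n, ∑ y : Fin n, if x = b then if x = a then c x y else 0 else 0) -
          ∑ x : Fin n, ∑ y : Fin n, if y = b then if x = a then c x y else 0 else 0) -
        ∑ x : Fin n, ∑ y : Fin n, if x = b then if y = a then c x y else 0 else 0) +
      ∑ x : Fin n, ∑ y : Fin n, if y = b then if y = a then c x y else 0 else 0)
    = (if a = b then (∑ y, c a y) + (∑ x, c x a) else 0) - c a b - c b a := by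
  have e1 : (∑ x : Fin n, ∑ y : Fin n, if x = b then if x = a then c x y else 0 else 0)
      = if a = b then ∑ y, c a y else 0 := by
    rcases eq_or_ne a b with rfl | hab
    · rw [if_pos rfl, Finset.sum_comm]
      simp
    · rw [if_neg hab]
      refine Finset.sum_eq_zero fun x _ => Finset.sum_eq_zero fun y _ => ?_
      by_cases h1 : x = b <;> by_cases h2 : x = a <;> simp_all
  have e2 : (∑ x : Fin n, ∑ y : Fin n, if y = b then if x = a then c x y else 0 else 0)
      = c a b := by
    simp [Finset.sum_ite_eq']
  have e3 : (∑ x : Fin n, ∑ y : Fin n, if x = b then if y = a then c x y else 0 else 0)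
      = c b a := by
    have : ∀ x : Fin n, (∑ y : Fin n, if x = b then if y = a then c x y else 0 else 0)
        = if x = b then c x a else 0 := by
      intro x
      by_cases h : x = b <;> simp [h, Finset.sum_ite_eq']
    simp [this]
  have e4 : (∑ x : Fin n, ∑ y : Fin n, if y = b then if y = a then c x y else 0 else 0)
      = if a = b then ∑ x, c x a else 0 := by
    rcases eq_or_ne a b with rfl | hab
    · simp
    · rw [if_neg hab]
      refine Finset.sum_eq_zero fun x _ => Finset.sum_eq_zero fun y _ => ?_
      by_cases h1 : y = b <;> by_cases h2 : y = a <;> simp_all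
  rw [e1, e2, e3, e4]
  by_cases h : a = b <;> simp [h] <;> ring

lemma Qmat_apply (i j a b : Fin n) :
    (Qmat i j : Matrix (Fin n) (Fin n) F) a b =
      ((if i = a then 1 else 0) * (if i = b then 1 else 0)
        - (if i = a then 1 else 0) * (if j = b then 1 else 0)
        - (if j = a then 1 else 0) * (if i = b then 1 else 0)
        + (if j = a then 1 else 0) * (if j = b then 1 else 0)) := by
  simp [Qmat, Matrix.single, ite_and, Matrix.of_apply]
  split_ifs <;> ring

lemma Mdecomp (M : Matrix (Fin n) (Fin n) F)
    (hsym : ∀ a b, M a b = M b a) (hrow : ∀ a, ∑ b, M a b = 0) :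
    M = ∑ p : Fin n × Fin n,
      (if p.1 < p.2 then -M p.1 p.2 else 0) • (Qmat p.1 p.2 : Matrix (Fin n) (Fin n) F) := by
  ext a b
  rw [Matrix.sum_apply]
  simp only [Matrix.smul_apply, Qmat_apply, smul_eq_mul]
  rw [Fintype.sum_prod_type]
  simp only [mul_sub, mul_add, Finset.sum_sub_distrib, Finset.sum_add_distrib]
  simp only [mul_ite, ite_mul, mul_one, mul_zero, zero_mul, one_mul]
  rw [quad_sum (fun x y => if x < y then -M x y else 0) a b]
  rcases eq_or_ne a b with rfl | hab
  · simp only [if_pos rfl, lt_irrefl, if_neg (lt_irrefl a)]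
    rw [← Finset.sum_add_distrib]
    have hc : (∑ y : Fin n, ((if a < y then -M a y else 0) + (if y < a then -M y a else 0)))
        = ∑ y : Fin n, (-M a y + if y = a then M a y else 0) := by
      refine Finset.sum_congr rfl fun y _ => ?_
      rcases lt_trichotomy a y with h | h | h
      · rw [if_pos h, if_neg (asymm h), if_neg (by rintro rfl; exact lt_irrefl _ h)]
      · subst h
        simp
      · rw [if_neg (asymm h), if_pos h, if_neg (show ¬ y = a from fun he => lt_irrefl a (he ▸ h)),
          hsym y a]
        ring
    rw [hc, Finset.sum_add_distrib, Finset.sum_neg_distrib, hrow, Finset.sum_ite_eq']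
    simp
  · rw [if_neg hab]
    rcases lt_trichotomy a b with h | h | h
    · rw [if_pos h, if_neg (asymm h)]
      ring
    · exact absurd h hab
    · rw [if_neg (asymm h), if_pos h, hsym b a]
      ring

lemma lowerU_mem (M : Matrix (Fin n) (Fin n) F)
    (hsym : ∀ a b, M a b = M b a) (hrow : ∀ a, ∑ b, M a b = 0) :
    lowerU M ∈ EL F n := by
  rw [Mdecomp M hsym hrow]
  refine lowerU_sum_mem _ _ fun p _ => ?_
  rcases lt_or_ge p.1 p.2 with h | h
  · rw [if_pos h]
    exact lowerU_Q_mem (ne_of_lt h) _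
  · rw [if_neg (not_lt.mpr h), zero_smul, lowerU_one]
    exact (EL F n).one_mem

lemma XiD_mulVec_inl (j : Fin n) (t : F) (v : Fin n ⊕ Fin n → F) (i : Fin n) :
    (XiD j t).mulVec v (Sum.inl i) = v (Sum.inl i) + if i = j then t * v (Sum.inr j) else 0 := by
  rw [XiD, fromBlocks_mulVec]
  simp only [Sum.elim_inl, Pi.add_apply, Matrix.one_mulVec]
  congr 1
  simp [Matrix.mulVec, Matrix.single, dotProduct, ite_and, Function.comp,
    Finset.sum_ite_eq', eq_comm]

lemma XiD_mulVec_inr (j : Fin n) (t : F) (v : Fin n ⊕ Fin n → F) (i : Fin n) :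
    (XiD j t).mulVec v (Sum.inr i) = v (Sum.inr i) := by
  rw [XiD, fromBlocks_mulVec]
  simp [Matrix.one_mulVec, Function.comp]

lemma lowerM_mulVec_inl (L : Matrix (Fin n) (Fin n) F) (v : Fin n ⊕ Fin n → F) (i : Fin n) :
    (lowerM L).mulVec v (Sum.inl i) = v (Sum.inl i) := by
  rw [lowerM, fromBlocks_mulVec]
  simp [Matrix.one_mulVec, Function.comp]

lemma lowerM_mulVec_inr (L : Matrix (Fin n) (Fin n) F) (v : Fin n ⊕ Fin n → F) (i : Fin n) :
    (lowerM L).mulVec v (Sum.inr i) = L.mulVec (fun k => v (Sum.inl k)) i + v (Sum.inr i) := by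
  rw [lowerM, fromBlocks_mulVec]
  simp only [Sum.elim_inr, Pi.add_apply, Matrix.one_mulVec]
  rfl

lemma unit_mulVecLin_injective (g : (Matrix (Fin n ⊕ Fin n) (Fin n ⊕ Fin n) F)ˣ) :
    Function.Injective (Matrix.mulVecLin (g : Matrix (Fin n ⊕ Fin n) (Fin n ⊕ Fin n) F)) := by
  intro x y h
  have h1 : ((g⁻¹ : _ˣ) : Matrix (Fin n ⊕ Fin n) (Fin n ⊕ Fin n) F) * (g : Matrix _ _ F) = 1 := by
    rw [← Units.val_mul, inv_mul_cancel, Units.val_one]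
  have := congrArg (Matrix.mulVecLin ((g⁻¹ : _ˣ) : Matrix (Fin n ⊕ Fin n) (Fin n ⊕ Fin n) F)) h
  simp only [Matrix.mulVecLin_apply, Matrix.mulVec_mulVec, h1, Matrix.one_mulVec] at this
  exact this

lemma map_unit_cancel (g : (Matrix (Fin n ⊕ Fin n) (Fin n ⊕ Fin n) F)ˣ)
    (Λ : Submodule F (Fin n ⊕ Fin n → F)) :
    Submodule.map (Matrix.mulVecLin ((g⁻¹ : _ˣ) : Matrix (Fin n ⊕ Fin n) (Fin n ⊕ Fin n) F))
      (Submodule.map (Matrix.mulVecLin (g : Matrix (Fin n ⊕ Fin n) (Fin n ⊕ Fin n) F)) Λ) = Λ := by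
  rw [← Submodule.map_comp, ← Matrix.mulVecLin_mul, ← Units.val_mul, inv_mul_cancel,
    Units.val_one, Matrix.mulVecLin_one, Submodule.map_id]

lemma mem_kerInr_iff (w : Fin n ⊕ Fin n → F) :
    w ∈ LinearMap.ker (LinearMap.funLeft F F (Sum.inr : Fin n → Fin n ⊕ Fin n)) ↔
      ∀ i, w (Sum.inr i) = 0 := by
  rw [LinearMap.mem_ker, funext_iff]
  simp [LinearMap.funLeft_apply]

lemma mem_kerInl_iff (w : Fin n ⊕ Fin n → F) :
    w ∈ LinearMap.ker (LinearMap.funLeft F F (Sum.inl : Fin n → Fin n ⊕ Fin n)) ↔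
      ∀ i, w (Sum.inl i) = 0 := by
  rw [LinearMap.mem_ker, funext_iff]
  simp [LinearMap.funLeft_apply]

lemma base_case (Λ : Submodule F (Fin n ⊕ Fin n → F))
    (hiso : ∀ x ∈ Λ, ∀ y ∈ Λ,
      (∑ j, x (Sum.inr j) * y (Sum.inl j)) - (∑ j, x (Sum.inl j) * y (Sum.inr j)) = 0)
    (hdim : finrank F Λ = n)
    (hc : Sum.elim (1 : Fin n → F) (0 : Fin n → F) ∈ Λ)
    (hbot : Λ ⊓ LinearMap.ker (LinearMap.funLeft F F (Sum.inl : Fin n → Fin n ⊕ Fin n)) = ⊥) :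
    ∃ A ∈ EL F n,
      Λ = Submodule.map
        (Matrix.mulVecLin (A : Matrix (Fin n ⊕ Fin n) (Fin n ⊕ Fin n) F))
        (LinearMap.ker (LinearMap.funLeft F F (Sum.inr : Fin n → Fin n ⊕ Fin n))) := by
  classical
  set p1 : Λ →ₗ[F] (Fin n → F) :=
    (LinearMap.funLeft F F (Sum.inl : Fin n → Fin n ⊕ Fin n)).comp Λ.subtype with hp1
  have hinj : Function.Injective p1 := by
    rw [← LinearMap.ker_eq_bot, Submodule.eq_bot_iff]
    intro x hx
    have hx' : (x : Fin n ⊕ Fin n → F) ∈ Λ ⊓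
        LinearMap.ker (LinearMap.funLeft F F (Sum.inl : Fin n → Fin n ⊕ Fin n)) :=
      ⟨x.2, hx⟩
    rw [hbot, Submodule.mem_bot] at hx'
    exact Subtype.ext hx'
  have hfr : finrank F Λ = finrank F (Fin n → F) := by
    rw [hdim, Module.finrank_fin_fun]
  let e : Λ ≃ₗ[F] (Fin n → F) := p1.linearEquivOfInjective hinj hfr
  have he : ∀ x : Λ, e x = p1 x := fun x => LinearMap.linearEquivOfInjective_apply hinj hfr x
  set m : (Fin n → F) →ₗ[F] (Fin n → F) :=
    ((LinearMap.funLeft F F (Sum.inr : Fin n → Fin n ⊕ Fin n)).comp Λ.subtype).comp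
      (e.symm : (Fin n → F) →ₗ[F] Λ) with hm
  have hcoord1 : ∀ (x : Fin n → F) (i : Fin n), (e.symm x : Fin n ⊕ Fin n → F) (Sum.inl i) = x i := by
    intro x i
    have h := e.apply_symm_apply x
    rw [he] at h
    exact congrFun h i
  have hcoord2 : ∀ (x : Fin n → F) (i : Fin n),
      (e.symm x : Fin n ⊕ Fin n → F) (Sum.inr i) = m x i := fun x i => rfl
  have hbil : ∀ x y : Fin n → F, (∑ i, m x i * y i) = ∑ i, x i * m y i := by
    intro x y
    have h := hiso (e.symm x) (e.symm x).2 (e.symm y) (e.symm y).2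
    simp only [hcoord1, hcoord2] at h
    exact sub_eq_zero.mp h
  set M : Matrix (Fin n) (Fin n) F := LinearMap.toMatrix' m with hM
  have hMapp : ∀ z, M.mulVec z = m z := by
    intro z
    rw [← Matrix.toLin'_apply, hM, Matrix.toLin'_toMatrix']
  have hsymM : ∀ a b, M a b = M b a := by
    intro a b
    have h := hbil (fun k => if k = a then 1 else 0) (fun k => if k = b then 1 else 0)
    simp only [mul_ite, ite_mul, mul_one, one_mul, mul_zero, zero_mul,
      Finset.sum_ite_eq', Finset.mem_univ, if_true] at h
    rw [hM, LinearMap.toMatrix'_apply, LinearMap.toMatrix'_apply]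
    have e : ∀ c : Fin n, (Pi.single c (1:F) : Fin n → F) = fun k => if k = c then 1 else 0 :=
      fun c => funext fun k => Pi.single_apply c 1 k
    rw [e, e]
    exact h.symm
  have hce : e.symm 1 = ⟨Sum.elim (1 : Fin n → F) (0 : Fin n → F), hc⟩ := by
    rw [LinearEquiv.symm_apply_eq, he]
    funext i
    simp [hp1, LinearMap.funLeft_apply]
  have hrowM : ∀ a, (∑ b, M a b) = 0 := by
    intro a
    have h1 : (∑ b, M a b) = M.mulVec (fun _ => (1 : F)) a := by
      simp [Matrix.mulVec, dotProduct]
    rw [h1]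
    have h2 : (fun _ => (1 : F)) = (1 : Fin n → F) := rfl
    rw [h2, hMapp, hm]
    show (e.symm 1 : Fin n ⊕ Fin n → F) (Sum.inr a) = 0
    rw [hce]
    rfl
  refine ⟨lowerU M, lowerU_mem M hsymM hrowM, ?_⟩
  refine le_antisymm ?_ ?_
  · intro w hw
    refine ⟨Sum.elim (fun i => w (Sum.inl i)) 0, (mem_kerInr_iff _).mpr fun i => rfl, ?_⟩
    have hsymmW : e.symm (fun i => w (Sum.inl i)) = ⟨w, hw⟩ := by
      rw [LinearEquiv.symm_apply_eq, he]
      rfl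
    show (lowerM M).mulVec _ = w
    funext s
    rcases s with i | i
    · rw [lowerM_mulVec_inl]
      rfl
    · rw [lowerM_mulVec_inr]
      have h2 : (fun k => Sum.elim (fun i => w (Sum.inl i)) (0 : Fin n → F) (Sum.inl k))
          = fun i => w (Sum.inl i) := rfl
      rw [h2, hMapp]
      have h3 : m (fun i => w (Sum.inl i)) i
          = (↑(e.symm (fun i => w (Sum.inl i))) : Fin n ⊕ Fin n → F) (Sum.inr i) :=
        (hcoord2 _ i).symm
      rw [h3, hsymmW]
      simp
  · rintro w ⟨v, hv, rfl⟩
    have hv : ∀ i, v (Sum.inr i) = 0 := (mem_kerInr_iff v).mp hv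
    have h4 : (lowerM M).mulVec v
        = (↑(e.symm (fun i => v (Sum.inl i))) : Fin n ⊕ Fin n → F) := by
      funext s
      rcases s with i | i
      · rw [lowerM_mulVec_inl, hcoord1]
      · rw [lowerM_mulVec_inr, hMapp, hv i, add_zero, hcoord2]
    show (lowerM M).mulVec v ∈ Λ
    rw [h4]
    exact (e.symm _).2

lemma main_aux : ∀ (k : ℕ) (Λ : Submodule F (Fin n ⊕ Fin n → F)),
    (∀ x ∈ Λ, ∀ y ∈ Λ,
      (∑ j, x (Sum.inr j) * y (Sum.inl j)) - (∑ j, x (Sum.inl j) * y (Sum.inr j)) = 0) →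
    finrank F Λ = n →
    Sum.elim (1 : Fin n → F) (0 : Fin n → F) ∈ Λ →
    finrank F (Λ ⊓ LinearMap.ker (LinearMap.funLeft F F (Sum.inl : Fin n → Fin n ⊕ Fin n)) :
      Submodule F (Fin n ⊕ Fin n → F)) ≤ k →
    ∃ A ∈ EL F n,
      Λ = Submodule.map
        (Matrix.mulVecLin (A : Matrix (Fin n ⊕ Fin n) (Fin n ⊕ Fin n) F))
        (LinearMap.ker (LinearMap.funLeft F F (Sum.inr : Fin n → Fin n ⊕ Fin n))) := by
  intro k
  induction k with
  | zero =>
      intro Λ hiso hdim hc hk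
      refine base_case Λ hiso hdim hc ?_
      rw [← Submodule.finrank_eq_zero (R := F)]
      omega
  | succ k ih =>
      intro Λ hiso hdim hc hk
      by_cases hbot : Λ ⊓ LinearMap.ker
          (LinearMap.funLeft F F (Sum.inl : Fin n → Fin n ⊕ Fin n)) = ⊥
      · exact base_case Λ hiso hdim hc hbot
      -- pick a nonzero kernel vector v
      obtain ⟨v, hvmem, hvne⟩ := Submodule.exists_mem_ne_zero_of_ne_bot hbot
      obtain ⟨hvΛ, hvker⟩ := hvmem
      have hvinl : ∀ i, v (Sum.inl i) = 0 := (mem_kerInl_iff v).mp hvker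
      have hvj : ∃ j, v (Sum.inr j) ≠ 0 := by
        by_contra hno
        push_neg at hno
        apply hvne
        funext s
        rcases s with i | i
        · exact hvinl i
        · exact hno i
      obtain ⟨j, hj⟩ := hvj
      -- apply the generator g = XiD j 1
      set g : (Matrix (Fin n ⊕ Fin n) (Fin n ⊕ Fin n) F)ˣ := upperU j 1 with hg
      have hgval : (g : Matrix (Fin n ⊕ Fin n) (Fin n ⊕ Fin n) F) = XiD j 1 := rfl
      set Λ' : Submodule F (Fin n ⊕ Fin n → F) :=
        Submodule.map (Matrix.mulVecLin (XiD j 1)) Λ with hΛ'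
      have hmemΛ' : ∀ w ∈ Λ, (XiD j 1).mulVec w ∈ Λ' := fun w hw => ⟨w, hw, rfl⟩
      -- Λ' is isotropic
      have hiso' : ∀ x ∈ Λ', ∀ y ∈ Λ',
          (∑ i, x (Sum.inr i) * y (Sum.inl i)) - (∑ i, x (Sum.inl i) * y (Sum.inr i)) = 0 := by
        rintro x ⟨x', hx', rfl⟩ y ⟨y', hy', rfl⟩
        have h := hiso x' hx' y' hy'
        show (∑ i, (XiD j 1).mulVec x' (Sum.inr i) * (XiD j 1).mulVec y' (Sum.inl i))
          - (∑ i, (XiD j 1).mulVec x' (Sum.inl i) * (XiD j 1).mulVec y' (Sum.inr i)) = 0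
        simp only [XiD_mulVec_inl, XiD_mulVec_inr, one_mul, mul_add, add_mul,
          Finset.sum_add_distrib, mul_ite, ite_mul, mul_zero, zero_mul,
          Finset.sum_ite_eq', Finset.mem_univ, if_true]
        linear_combination h
      -- Λ' has the right dimension
      have hinj : Function.Injective (Matrix.mulVecLin (XiD j (1 : F))) := by
        rw [← hgval]
        exact unit_mulVecLin_injective g
      have hdim' : finrank F Λ' = n := by
        rw [hΛ']
        rw [← LinearEquiv.finrank_eq (Submodule.equivMapOfInjective _ hinj Λ)]
        exact hdim
      -- Λ' contains c₀
      have hc' : Sum.elim (1 : Fin n → F) (0 : Fin n → F) ∈ Λ' := by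
        have h1 : (XiD j 1).mulVec (Sum.elim (1 : Fin n → F) (0 : Fin n → F))
            = Sum.elim (1 : Fin n → F) (0 : Fin n → F) := by
          funext s
          rcases s with i | i
          · rw [XiD_mulVec_inl]
            simp
          · rw [XiD_mulVec_inr]
        exact h1 ▸ hmemΛ' _ hc
      -- rank drop
      set W : Submodule F (Fin n ⊕ Fin n → F) :=
        (Λ ⊓ LinearMap.ker (LinearMap.funLeft F F (Sum.inl : Fin n → Fin n ⊕ Fin n))) ⊓
          LinearMap.ker ((LinearMap.proj (Sum.inr j)) :
            (Fin n ⊕ Fin n → F) →ₗ[F] F) with hW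
      have hle : Λ' ⊓ LinearMap.ker (LinearMap.funLeft F F (Sum.inl : Fin n → Fin n ⊕ Fin n))
          ≤ Submodule.map (Matrix.mulVecLin (XiD j 1)) W := by
        rintro y ⟨⟨w, hwΛ, rfl⟩, hyker⟩
        have hy : ∀ i, (XiD j 1).mulVec w (Sum.inl i) = 0 :=
          (mem_kerInl_iff _).mp hyker
        have hwi : ∀ i, i ≠ j → w (Sum.inl i) = 0 := by
          intro i hij
          have := hy i
          rwa [XiD_mulVec_inl, if_neg hij, add_zero] at this
        have hwj : w (Sum.inl j) + w (Sum.inr j) = 0 := by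
          have := hy j
          rwa [XiD_mulVec_inl, if_pos rfl, one_mul] at this
        have hwlj : w (Sum.inl j) = 0 := by
          have h := hiso v hvΛ w hwΛ
          have h2 : (∑ i, v (Sum.inl i) * w (Sum.inr i)) = 0 :=
            Finset.sum_eq_zero fun i _ => by rw [hvinl i, zero_mul]
          have h3 : (∑ i, v (Sum.inr i) * w (Sum.inl i)) = v (Sum.inr j) * w (Sum.inl j) :=
            Finset.sum_eq_single j (fun i _ hij => by rw [hwi i hij, mul_zero])
              (fun h => absurd (Finset.mem_univ j) h)
          rw [h2, h3, sub_zero] at h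
          exact (mul_eq_zero.mp h).resolve_left hj
        have hwrj : w (Sum.inr j) = 0 := by
          rw [hwlj, zero_add] at hwj
          exact hwj
        refine ⟨w, ⟨⟨hwΛ, (mem_kerInl_iff w).mpr ?_⟩, ?_⟩, rfl⟩
        · intro i
          by_cases hij : i = j
          · rw [hij]; exact hwlj
          · exact hwi i hij
        · exact hwrj
      have hVmem : v ∈ Λ ⊓ LinearMap.ker
          (LinearMap.funLeft F F (Sum.inl : Fin n → Fin n ⊕ Fin n)) := ⟨hvΛ, hvker⟩
      have hWlt : W < Λ ⊓ LinearMap.ker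
          (LinearMap.funLeft F F (Sum.inl : Fin n → Fin n ⊕ Fin n)) := by
        refine lt_of_le_of_ne inf_le_left fun hEq => ?_
        have : v ∈ W := hEq ▸ hVmem
        exact hj this.2
      have hrank : finrank F (Λ' ⊓ LinearMap.ker
          (LinearMap.funLeft F F (Sum.inl : Fin n → Fin n ⊕ Fin n)) :
            Submodule F (Fin n ⊕ Fin n → F)) ≤ k := by
        have h1 := Submodule.finrank_mono hle
        have h2 : finrank F (Submodule.map (Matrix.mulVecLin (XiD j 1)) W) = finrank F W :=
          (LinearEquiv.finrank_eq (Submodule.equivMapOfInjective _ hinj W)).symm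
        have h3 := Submodule.finrank_lt_finrank_of_lt hWlt
        omega
      obtain ⟨A', hA', hmap⟩ := ih Λ' hiso' hdim' hc' hrank
      refine ⟨g⁻¹ * A', mul_mem (inv_mem (upperU_mem j 1)) hA', ?_⟩
      rw [Units.val_mul, Matrix.mulVecLin_mul, Submodule.map_comp, ← hmap, hΛ', ← hgval,
        map_unit_cancel]

end Aux

/-- Every Lagrangian subspace `Λ` of `F^n × F^n` (realized as `F^{Fin n ⊕ Fin n}`, with the
first summand carrying potentials and the second currents) containing
`c₀ = ((1,…,1),(0,…,0))` has the form `Λ = A·(F^n × {0})` for some `A ∈ EL_n(F)`. -/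
theorem stmt7 {F : Type*} [Field F] {n : ℕ} (hn : 0 < n)
    (Λ : Submodule F (Fin n ⊕ Fin n → F))
    (hiso : ∀ x ∈ Λ, ∀ y ∈ Λ,
      (∑ j, x (Sum.inr j) * y (Sum.inl j)) - (∑ j, x (Sum.inl j) * y (Sum.inr j)) = 0)
    (hdim : finrank F Λ = n)
    (hc : Sum.elim (1 : Fin n → F) (0 : Fin n → F) ∈ Λ) :
    ∃ A ∈ EL F n,
      Λ = Submodule.map
        (Matrix.mulVecLin (A : Matrix (Fin n ⊕ Fin n) (Fin n ⊕ Fin n) F))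
        (LinearMap.ker (LinearMap.funLeft F F (Sum.inr : Fin n → Fin n ⊕ Fin n))) := by
  exact main_aux
    (finrank F (Λ ⊓ LinearMap.ker (LinearMap.funLeft F F (Sum.inl : Fin n → Fin n ⊕ Fin n)) :
      Submodule F (Fin n ⊕ Fin n → F))) Λ hiso hdim hc le_rfl
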